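/- Let α be a complex number with |α| < 1 and let C : ℕ × ℕ → ℂ satisfy the two-mode squeezing recurrences with parameters α = β (for all m, n ≥ 0: √(m+1) · C (m+1, n) equals α · √n · C (m, n−1) when n ≥ 1 and 0 when n = 0; and √(n+1) · C (m, n+1) equals α · √m · C (m−1, n) when m ≥ 1 and 0 when m = 0), together with the normalization Σ_{m,n} |C (m,n)|² = 1 and the convention that C (0,0) is a positive real number. Then C is uniquely determined: C (m, n) = 0 for m ≠ n and C (m, m) = √(1 − |α|²) · α^m for all m. -/

import Mathlib

/-- Uniqueness of the normalized two-mode squeezed vacuum: the coupled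
recurrences (with `α = β`, `|α| < 1`), normalization and phase convention force
`C (m, n) = 0` for `m ≠ n` and `C (m, m) = √(1-|α|²) αᵐ`. -/
theorem two_mode_squeezed_vacuum_unique (α : ℂ) (hα : ‖α‖ < 1) (C : ℕ × ℕ → ℂ)
    (ha : ∀ m n : ℕ, 1 ≤ n →
      (Real.sqrt (m + 1) : ℂ) * C (m + 1, n) = α * (Real.sqrt n : ℂ) * C (m, n - 1))
    (ha0 : ∀ m : ℕ, (Real.sqrt (m + 1) : ℂ) * C (m + 1, 0) = 0)
    (hb : ∀ m n : ℕ, 1 ≤ m →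
      (Real.sqrt (n + 1) : ℂ) * C (m, n + 1) = α * (Real.sqrt m : ℂ) * C (m - 1, n))
    (hb0 : ∀ n : ℕ, (Real.sqrt (n + 1) : ℂ) * C (0, n + 1) = 0)
    (hnorm : HasSum (fun p : ℕ × ℕ => ‖C p‖ ^ 2) 1)
    (hphase : ∃ r : ℝ, 0 < r ∧ C (0, 0) = (r : ℂ)) :
    (∀ m n : ℕ, m ≠ n → C (m, n) = 0) ∧
    (∀ m : ℕ, C (m, m) = (Real.sqrt (1 - ‖α‖ ^ 2) : ℂ) * α ^ m) := by
  obtain ⟨r, hr, hr0⟩ := hphase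
  have hsq : ∀ k : ℕ, ((Real.sqrt (k + 1) : ℝ) : ℂ) ≠ 0 := by
    intro k
    have : (0 : ℝ) < Real.sqrt (k + 1) := Real.sqrt_pos.2 (by positivity)
    exact_mod_cast this.ne'
  -- upper: n < m implies zero
  have hupper : ∀ m n : ℕ, n < m → C (m, n) = 0 := by
    intro m
    induction m with
    | zero => intro n hn; omega
    | succ m ih =>
      intro n hn
      rcases Nat.eq_zero_or_pos n with h0 | h1
      · subst h0
        exact (mul_eq_zero.1 (ha0 m)).resolve_left (hsq m)
      · have h := ha m n h1
        rw [ih (n - 1) (by omega), mul_zero] at h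
        exact (mul_eq_zero.1 h).resolve_left (hsq m)
  have hlower : ∀ n m : ℕ, m < n → C (m, n) = 0 := by
    intro n
    induction n with
    | zero => intro m hm; omega
    | succ n ih =>
      intro m hm
      rcases Nat.eq_zero_or_pos m with h0 | h1
      · subst h0
        exact (mul_eq_zero.1 (hb0 n)).resolve_left (hsq n)
      · have h := hb m n h1
        rw [ih (m - 1) (by omega), mul_zero] at h
        exact (mul_eq_zero.1 h).resolve_left (hsq n)
  have hoff : ∀ m n : ℕ, m ≠ n → C (m, n) = 0 := by
    intro m n hmn
    rcases lt_or_gt_of_ne hmn with h | h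
    · exact hlower n m h
    · exact hupper m n h
  -- diagonal recursion
  have hdiag : ∀ m : ℕ, C (m, m) = α ^ m * r := by
    intro m
    induction m with
    | zero => simpa using hr0
    | succ m ih =>
      have h := ha m (m + 1) (by omega)
      simp only [Nat.add_sub_cancel] at h
      have h' : ((Real.sqrt (m + 1) : ℝ) : ℂ) * C (m + 1, m + 1)
          = ((Real.sqrt (m + 1) : ℝ) : ℂ) * (α * C (m, m)) := by
        rw [h]; push_cast; ring
      have := mul_left_cancel₀ (hsq m) h'
      rw [this, ih]; ring
  have hαlt : ‖α‖ ^ 2 < 1 := by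
    have h0 := norm_nonneg α
    nlinarith
  have hne : (1 : ℝ) - ‖α‖ ^ 2 ≠ 0 := by nlinarith
  -- restrict sum to the diagonal
  have hinj : Function.Injective (fun m : ℕ => ((m, m) : ℕ × ℕ)) := by
    intro a b h; simpa using h
  have hsupp : ∀ p ∉ Set.range (fun m : ℕ => ((m, m) : ℕ × ℕ)),
      ‖C p‖ ^ 2 = 0 := by
    rintro ⟨m, n⟩ hp
    have hmn : m ≠ n := by
      intro h; exact hp ⟨m, by simp [h]⟩
    rw [hoff m n hmn]; simp
  have hdiag_sum : HasSum (fun m : ℕ => ‖C (m, m)‖ ^ 2) 1 :=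
    (hinj.hasSum_iff hsupp).2 hnorm
  have heq : (fun m : ℕ => ‖C (m, m)‖ ^ 2)
      = fun m : ℕ => r ^ 2 * (‖α‖ ^ 2) ^ m := by
    funext m
    rw [hdiag m, norm_mul, norm_pow, Complex.norm_real, Real.norm_eq_abs, abs_of_pos hr]
    ring
  rw [heq] at hdiag_sum
  have hgeom : HasSum (fun m : ℕ => r ^ 2 * (‖α‖ ^ 2) ^ m)
      (r ^ 2 * (1 - ‖α‖ ^ 2)⁻¹) :=
    (hasSum_geometric_of_lt_one (by positivity) hαlt).mul_left _
  have h1 : (1 : ℝ) = r ^ 2 * (1 - ‖α‖ ^ 2)⁻¹ :=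
    hdiag_sum.unique hgeom
  have hr2 : r ^ 2 = 1 - ‖α‖ ^ 2 := by
    field_simp at h1; linarith
  refine ⟨hoff, fun m => ?_⟩
  rw [hdiag m, ← hr2, Real.sqrt_sq hr.le]; ring
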